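/- arXiv:1708.06304 — 2 statements merged into one kernel-verified Lean document; each statement's English description precedes it below -/
import Mathlib

section
/- For the fundamental line rogue wave q = 1 - (2i l₂ + 1)/(l₁² + l₂² + θ₀) with p real (p_I = 0), so that l₂ = -a' t + b₂ depends only on t (with a' ≠ 0) while l₁ is a nonconstant affine function of (x,y,t): one has sup_{x,y} |q(x,y,t)| → 1 as t → ±∞, and at t with l₂ = 0, along the line l₁ = 0 the amplitude satisfies |q| = |1 - 1/θ₀| which equals 3 when θ₀ = 1/4. -/
open Filter

lemma g_tendsto (θ₀ : ℝ) (hθ : 0 < θ₀) :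
    Tendsto (fun u : ℝ => (2 * u + 1) / (u ^ 2 + θ₀)) atTop (nhds 0) := by
  have h3 : Tendsto (fun u : ℝ => 3 / u) atTop (nhds 0) :=
    Tendsto.div_atTop tendsto_const_nhds tendsto_id
  apply squeeze_zero_norm' _ h3
  filter_upwards [eventually_ge_atTop (1 : ℝ)] with u hu
  have hu0 : (0:ℝ) < u := lt_of_lt_of_le one_pos hu
  have hd : (0:ℝ) < u ^ 2 + θ₀ := by positivity
  have h1 : (0:ℝ) ≤ (2 * u + 1) / (u ^ 2 + θ₀) := by positivity
  rw [Real.norm_eq_abs, abs_of_nonneg h1]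
  rw [div_le_div_iff₀ hd hu0]
  nlinarith

lemma bound_key (θ₀ : ℝ) (hθ : 0 < θ₀) (L1 L2 : ℝ) (qv : ℂ)
    (hq : qv = 1 - (2 * Complex.I * (L2 : ℂ) + 1) / ((L1 ^ 2 + L2 ^ 2 + θ₀ : ℝ) : ℂ)) :
    |‖qv‖ - 1| ≤ (2 * |L2| + 1) / (|L2| ^ 2 + θ₀) := by
  have hD : (0:ℝ) < L1 ^ 2 + L2 ^ 2 + θ₀ := by positivity
  have h1 : |‖qv‖ - 1| ≤ ‖qv - 1‖ := by
    simpa using abs_norm_sub_norm_le qv 1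
  have h2 : ‖qv - 1‖
      = ‖(2 * Complex.I * (L2 : ℂ) + 1)‖ / (L1 ^ 2 + L2 ^ 2 + θ₀) := by
    rw [hq]
    rw [show (1 : ℂ) - (2 * Complex.I * (L2 : ℂ) + 1) / ((L1 ^ 2 + L2 ^ 2 + θ₀ : ℝ) : ℂ) - 1
        = -((2 * Complex.I * (L2 : ℂ) + 1) / ((L1 ^ 2 + L2 ^ 2 + θ₀ : ℝ) : ℂ)) by ring]
    rw [norm_neg, norm_div, Complex.norm_real, Real.norm_eq_abs, abs_of_pos hD]
  have h3 : ‖(2 * Complex.I * (L2 : ℂ) + 1)‖ ≤ 2 * |L2| + 1 := by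
    calc ‖(2 * Complex.I * (L2 : ℂ) + 1)‖
        ≤ ‖(2 * Complex.I * (L2 : ℂ))‖ + ‖(1 : ℂ)‖ := norm_add_le _ _
      _ = 2 * |L2| + 1 := by
          simp [norm_mul, Complex.norm_real]
  have h4 : ‖(2 * Complex.I * (L2 : ℂ) + 1)‖ / (L1 ^ 2 + L2 ^ 2 + θ₀)
      ≤ (2 * |L2| + 1) / (|L2| ^ 2 + θ₀) := by
    apply div_le_div₀ (by positivity) h3 (by positivity)
    have : |L2| ^ 2 = L2 ^ 2 := sq_abs L2
    nlinarith [sq_nonneg L1]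
  calc |‖qv‖ - 1| ≤ ‖qv - 1‖ := h1
    _ = _ := h2
    _ ≤ _ := h4

theorem stmt_14 (a' b₂ α β δ ε θ₀ : ℝ) (ha' : a' ≠ 0) (hαβ : (α, β) ≠ (0, 0))
    (hθ : 0 < θ₀)
    (l₁ : ℝ → ℝ → ℝ → ℝ) (l₂ : ℝ → ℝ)
    (hl₁ : ∀ x y t, l₁ x y t = α * x + β * y + δ * t + ε)
    (hl₂ : ∀ t, l₂ t = -a' * t + b₂)
    (q : ℝ → ℝ → ℝ → ℂ)
    (hq : ∀ x y t, q x y t = 1 - (2 * Complex.I * (l₂ t : ℂ) + 1)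
        / (((l₁ x y t) ^ 2 + (l₂ t) ^ 2 + θ₀ : ℝ) : ℂ)) :
    TendstoUniformly (fun t (v : ℝ × ℝ) => ‖q v.1 v.2 t‖)
      (fun _ => 1) Filter.atTop ∧
    TendstoUniformly (fun t (v : ℝ × ℝ) => ‖q v.1 v.2 t‖)
      (fun _ => 1) Filter.atBot ∧
    (∀ x y t : ℝ, l₂ t = 0 → l₁ x y t = 0 →
      ‖q x y t‖ = |1 - 1 / θ₀| ∧
      (θ₀ = 1 / 4 → ‖q x y t‖ = 3)) := by
  have ha'' : (0:ℝ) < |a'| := abs_pos.mpr ha'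
  have habs : ∀ t, |l₂ t| = |a'| * |t - b₂ / a'| := by
    intro t
    rw [hl₂, ← abs_mul, show -a' * t + b₂ = -(a' * (t - b₂ / a')) by field_simp; ring,
      abs_neg]
  -- |l₂| → ∞ along atTop and atBot
  have htop : Tendsto (fun t => |l₂ t|) atTop atTop := by
    simp only [habs]
    apply Tendsto.const_mul_atTop ha''
    exact tendsto_abs_atTop_atTop.comp (tendsto_atTop_add_const_right _ _ tendsto_id)
  have hbot : Tendsto (fun t => |l₂ t|) atBot atTop := by
    simp only [habs]
    apply Tendsto.const_mul_atTop ha''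
    exact tendsto_abs_atBot_atTop.comp (tendsto_atBot_add_const_right _ _ tendsto_id)
  have key : ∀ (f : Filter ℝ), Tendsto (fun t => |l₂ t|) f atTop →
      TendstoUniformly (fun t (v : ℝ × ℝ) => ‖q v.1 v.2 t‖)
        (fun _ => 1) f := by
    intro f hf
    rw [Metric.tendstoUniformly_iff]
    intro e he
    have hb : Tendsto (fun t => (2 * |l₂ t| + 1) / (|l₂ t| ^ 2 + θ₀)) f (nhds 0) :=
      (g_tendsto θ₀ hθ).comp hf
    filter_upwards [hb.eventually (gt_mem_nhds he)] with t ht v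
    have := bound_key θ₀ hθ (l₁ v.1 v.2 t) (l₂ t) (q v.1 v.2 t) (hq v.1 v.2 t)
    rw [Real.dist_eq, abs_sub_comm]
    exact lt_of_le_of_lt this ht
  refine ⟨key _ htop, key _ hbot, ?_⟩
  intro x y t h2 h1
  have hqv : q x y t = ((1 - 1 / θ₀ : ℝ) : ℂ) := by
    rw [hq, h1, h2]
    push_cast
    field_simp
    simp
  have habs' : ‖q x y t‖ = |1 - 1 / θ₀| := by
    rw [hqv, Complex.norm_real, Real.norm_eq_abs]
  refine ⟨habs', fun hθ4 => ?_⟩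
  rw [habs', hθ4]
  norm_num
end

section
/- Verification of an explicit mixed solution: the function q(x,y,t) with numerator -(-2+2i)e^{-i(2x+y)} + (2+2i)e^{i(2x+y)} + e^{-2x+y} + 4i(e^{-3t} - e^{3t}) and denominator (-2+2i)e^{-i(2x+y)} - (2+2i)e^{i(2x+y)} + e^{-2x+y} + 4(e^{-3t} + e^{3t}) satisfies |q(x,y,t)| → 1 as t → ±∞ uniformly on compact sets in (x,y), and the denominator is real-valued and strictly positive for all real x, y, t. -/
noncomputable def AA (x y : ℝ) : ℝ := 4*Real.cos (2*x+y) - 4*Real.sin (2*x+y)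
noncomputable def EE (x y : ℝ) : ℝ := Real.exp (-2*x+y)
noncomputable def BB (t : ℝ) : ℝ := 4*(Real.exp (-3*t) - Real.exp (3*t))
noncomputable def CC (t : ℝ) : ℝ := 4*(Real.exp (-3*t) + Real.exp (3*t))

lemma abs_AA (x y : ℝ) : |AA x y| ≤ 8 := by
  have h1 := Real.neg_one_le_cos (2*x+y); have h2 := Real.cos_le_one (2*x+y)
  have h3 := Real.neg_one_le_sin (2*x+y); have h4 := Real.sin_le_one (2*x+y)
  rw [AA, abs_le]; constructor <;> nlinarith

lemma EE_pos (x y : ℝ) : 0 < EE x y := Real.exp_pos _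

lemma CC_ge (t : ℝ) : 8 ≤ CC t := by
  have h : Real.exp (-3*t) * Real.exp (3*t) = 1 := by
    rw [← Real.exp_add]; norm_num
  have h1 := Real.exp_pos (-3*t); have h2 := Real.exp_pos (3*t)
  rw [CC]; nlinarith [sq_nonneg (Real.exp (-3*t) - Real.exp (3*t))]

lemma CC_top (R t : ℝ) (h0 : 0 ≤ R) (h : R ≤ t) : R ≤ CC t := by
  have h1 := Real.add_one_le_exp (3*t)
  have h2 := Real.exp_pos (-3*t)
  rw [CC]; nlinarith

lemma CC_bot (R t : ℝ) (h0 : 0 ≤ R) (h : t ≤ -R) : R ≤ CC t := by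
  have h1 := Real.add_one_le_exp (-3*t)
  have h2 := Real.exp_pos (3*t)
  rw [CC]; nlinarith

lemma BB_sq (t : ℝ) : BB t ^ 2 = CC t ^ 2 - 64 := by
  have h : Real.exp (-3*t) * Real.exp (3*t) = 1 := by
    rw [← Real.exp_add]; norm_num
  rw [BB, CC]; nlinarith

lemma arith (M c d m : ℝ) (hM : 1 ≤ M) (hC : 16 ≤ c) (hd2 : c/2 ≤ d) (hdpos : 0 < d)
    (hNum : m ≤ 32*M + 64 + 2*c*(M+8)) : m * c ≤ (16*M+80) * d^2 := by
  nlinarith [mul_le_mul_of_nonneg_right hNum (by linarith : (0:ℝ) ≤ c),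
    mul_le_mul_of_nonneg_left (mul_le_mul hd2 hd2 (by linarith) hdpos.le)
      (show (0:ℝ) ≤ 16*M+80 by linarith),
    mul_nonneg (mul_nonneg (by linarith : (0:ℝ) ≤ c - 16) (by linarith : (0:ℝ) ≤ 2*M+4)) (by linarith : (0:ℝ) ≤ c)]

lemma key (M x y t : ℝ) (hM : 1 ≤ M) (hE : EE x y ≤ M) (hC : 16 ≤ CC t) :
    |Real.sqrt ((AA x y + EE x y)^2 + BB t ^2) / (EE x y - AA x y + CC t) - 1|
      ≤ (16*M + 80)/CC t := by
  set a := AA x y with ha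
  set e := EE x y with he
  set b := BB t with hb
  set c := CC t with hc
  have hA := abs_le.mp (abs_AA x y)
  have hepos := EE_pos x y
  rw [← he] at hepos
  set d := e - a + c with hd
  have hd2 : c/2 ≤ d := by rw [hd]; nlinarith [hA.1]
  have hdpos : 0 < d := by nlinarith
  have hcpos : (0:ℝ) < c := by linarith
  set s := Real.sqrt ((a+e)^2 + b^2) / d with hs
  have hnn : 0 ≤ s := by positivity
  have hsq : s^2 = ((a+e)^2 + b^2)/d^2 := by
    rw [hs, div_pow, Real.sq_sqrt (by positivity)]
  have step1 : |s - 1| ≤ |s^2 - 1| := by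
    calc |s - 1| ≤ |s - 1| * (s + 1) := le_mul_of_one_le_right (abs_nonneg _) (by linarith)
      _ = |s ^ 2 - 1| := by
          rw [← abs_of_nonneg (show (0:ℝ) ≤ s+1 by linarith), ← abs_mul]
          ring_nf
  have hval : s^2 - 1 = (4*a*e - 64 - 2*c*(e-a))/d^2 := by
    rw [hsq]
    rw [div_sub' (by positivity)]
    congr 1
    rw [hb, BB_sq, ← hc, hd]; ring
  have hNum : |4*a*e - 64 - 2*c*(e-a)| ≤ 32*M + 64 + 2*c*(M+8) := by
    rw [abs_le]; constructor <;> nlinarith [hA.1, hA.2]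
  have hfin : |4*a*e - 64 - 2*c*(e-a)|/d^2 ≤ (16*M+80)/c := by
    rw [div_le_div_iff₀ (by positivity) hcpos]
    exact arith M c d _ hM hC hd2 hdpos hNum
  calc |s - 1| ≤ |s^2 - 1| := step1
    _ = |4*a*e - 64 - 2*c*(e-a)|/d^2 := by rw [hval, abs_div, abs_of_nonneg (by positivity : (0:ℝ) ≤ d^2)]
    _ ≤ (16*M+80)/c := hfin

lemma den_eq (x y t : ℝ) :
      ((-2 + 2 * Complex.I) * Complex.exp (-Complex.I * (2 * (x : ℂ) + (y : ℂ)))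
        - (2 + 2 * Complex.I) * Complex.exp (Complex.I * (2 * (x : ℂ) + (y : ℂ)))
        + Complex.exp (-2 * (x : ℂ) + (y : ℂ))
        + 4 * (Complex.exp (-3 * (t : ℂ)) + Complex.exp (3 * (t : ℂ))))
      = ((EE x y - AA x y + CC t : ℝ) : ℂ) := by
  rw [EE, AA, CC]
  apply Complex.ext <;>
  · simp [Complex.exp_re, Complex.exp_im, Complex.add_re, Complex.add_im, Complex.mul_re,
      Complex.mul_im]
    ring_nf
    simp only [show (x:ℂ)*2+(y:ℂ) = ((y + x*2 : ℝ):ℂ) by push_cast; ring,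
      Complex.cos_ofReal_re, Complex.sin_ofReal_re, Complex.cos_ofReal_im,
      Complex.sin_ofReal_im, show ∀ a b : ℝ, -a - b*2 = -(a + b*2) from fun a b => by ring,
      Real.cos_neg, Real.sin_neg]
    ring_nf

lemma num_eq (x y t : ℝ) :
      (-(-2 + 2 * Complex.I) * Complex.exp (-Complex.I * (2 * (x : ℂ) + (y : ℂ)))
        + (2 + 2 * Complex.I) * Complex.exp (Complex.I * (2 * (x : ℂ) + (y : ℂ)))
        + Complex.exp (-2 * (x : ℂ) + (y : ℂ))
        + 4 * Complex.I * (Complex.exp (-3 * (t : ℂ)) - Complex.exp (3 * (t : ℂ))))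
      = ((AA x y + EE x y : ℝ) : ℂ) + ((BB t : ℝ) : ℂ) * Complex.I := by
  rw [EE, AA, BB]
  apply Complex.ext <;>
  · simp [Complex.exp_re, Complex.exp_im, Complex.add_re, Complex.add_im, Complex.mul_re,
      Complex.mul_im]
    ring_nf
    simp only [show (x:ℂ)*2+(y:ℂ) = ((y + x*2 : ℝ):ℂ) by push_cast; ring,
      Complex.cos_ofReal_re, Complex.sin_ofReal_re, Complex.cos_ofReal_im,
      Complex.sin_ofReal_im, show ∀ a b : ℝ, -a - b*2 = -(a + b*2) from fun a b => by ring,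
      Real.cos_neg, Real.sin_neg]
    ring_nf

lemma abs_mk (n b : ℝ) : ‖(n:ℂ) + (b:ℂ)*Complex.I‖ = Real.sqrt (n^2+b^2) := by
  rw [Complex.norm_def, Complex.normSq_apply]
  simp
  ring_nf

theorem stmt_18 (num den : ℝ → ℝ → ℝ → ℂ)
    (hnum : ∀ x y t : ℝ, num x y t =
      -(-2 + 2 * Complex.I) * Complex.exp (-Complex.I * (2 * (x : ℂ) + (y : ℂ)))
        + (2 + 2 * Complex.I) * Complex.exp (Complex.I * (2 * (x : ℂ) + (y : ℂ)))
        + Complex.exp (-2 * (x : ℂ) + (y : ℂ))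
        + 4 * Complex.I * (Complex.exp (-3 * (t : ℂ)) - Complex.exp (3 * (t : ℂ))))
    (hden : ∀ x y t : ℝ, den x y t =
      (-2 + 2 * Complex.I) * Complex.exp (-Complex.I * (2 * (x : ℂ) + (y : ℂ)))
        - (2 + 2 * Complex.I) * Complex.exp (Complex.I * (2 * (x : ℂ) + (y : ℂ)))
        + Complex.exp (-2 * (x : ℂ) + (y : ℂ))
        + 4 * (Complex.exp (-3 * (t : ℂ)) + Complex.exp (3 * (t : ℂ)))) :
    (∀ x y t : ℝ, (den x y t).im = 0 ∧ 0 < (den x y t).re) ∧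
    (∀ K : Set (ℝ × ℝ), IsCompact K →
      TendstoUniformlyOn
        (fun t (v : ℝ × ℝ) => ‖num v.1 v.2 t / den v.1 v.2 t‖)
        (fun _ => 1) Filter.atTop K ∧
      TendstoUniformlyOn
        (fun t (v : ℝ × ℝ) => ‖num v.1 v.2 t / den v.1 v.2 t‖)
        (fun _ => 1) Filter.atBot K) := by
  have hdpos : ∀ x y t : ℝ, 0 < EE x y - AA x y + CC t := by
    intro x y t
    have := abs_le.mp (abs_AA x y)
    have := EE_pos x y
    have := CC_ge t
    linarith [this]
  constructor
  · intro x y t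
    rw [hden x y t, den_eq x y t]
    refine ⟨Complex.ofReal_im _, ?_⟩
    rw [Complex.ofReal_re]
    exact hdpos x y t
  · intro K hK
    -- bound for EE on K
    have hg : Continuous fun v : ℝ × ℝ => EE v.1 v.2 := by
      unfold EE; fun_prop
    obtain ⟨M0, hM0⟩ := (hK.image hg).bddAbove
    set M : ℝ := max M0 1 with hMdef
    have hM1 : (1:ℝ) ≤ M := le_max_right _ _
    have hMK : ∀ v ∈ K, EE v.1 v.2 ≤ M := by
      intro v hv
      exact le_trans (hM0 (Set.mem_image_of_mem _ hv)) (le_max_left _ _)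
    have habs : ∀ (t : ℝ) (v : ℝ × ℝ),
        ‖num v.1 v.2 t / den v.1 v.2 t‖
          = Real.sqrt ((AA v.1 v.2 + EE v.1 v.2)^2 + BB t ^2)
              / (EE v.1 v.2 - AA v.1 v.2 + CC t) := by
      intro t v
      rw [hnum, hden, num_eq, den_eq, norm_div, abs_mk, Complex.norm_real, Real.norm_eq_abs,
        abs_of_pos (hdpos v.1 v.2 t)]
    have main : ∀ ε > (0:ℝ), ∃ R : ℝ, 16 ≤ R ∧
        ∀ t, R ≤ CC t → ∀ v ∈ K,
          dist (1:ℝ) (‖num v.1 v.2 t / den v.1 v.2 t‖) < ε := by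
      intro ε hε
      set P : ℝ := 16*M + 80 with hP
      have hPpos : 0 < P := by rw [hP]; linarith
      refine ⟨max 16 (2*P/ε), le_max_left _ _, ?_⟩
      intro t ht v hv
      have hR16 : (16:ℝ) ≤ max 16 (2*P/ε) := le_max_left _ _
      have hC16 : 16 ≤ CC t := le_trans hR16 ht
      have hRε : 2*P/ε ≤ CC t := le_trans (le_max_right _ _) ht
      have hCpos : (0:ℝ) < CC t := by linarith
      rw [habs, Real.dist_eq, abs_sub_comm]
      have h1 := key M v.1 v.2 t hM1 (hMK v hv) hC16
      have h2 : P / CC t ≤ P / (2*P/ε) := by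
        apply div_le_div_of_nonneg_left hPpos.le (by positivity) hRε
      have h3 : P / (2*P/ε) = ε/2 := by
        field_simp
      calc |Real.sqrt ((AA v.1 v.2 + EE v.1 v.2)^2 + BB t ^2)
              / (EE v.1 v.2 - AA v.1 v.2 + CC t) - 1|
          ≤ P / CC t := h1
        _ ≤ ε/2 := by rw [← h3]; exact h2
        _ < ε := by linarith
    constructor
    · rw [Metric.tendstoUniformlyOn_iff]
      intro ε hε
      obtain ⟨R, hR16, hR⟩ := main ε hε
      filter_upwards [Filter.eventually_ge_atTop R] with t ht v hv
      exact hR t (CC_top R t (by linarith) ht) v hv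
    · rw [Metric.tendstoUniformlyOn_iff]
      intro ε hε
      obtain ⟨R, hR16, hR⟩ := main ε hε
      filter_upwards [Filter.eventually_le_atBot (-R)] with t ht v hv
      exact hR t (CC_bot R t (by linarith) ht) v hv
end
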